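/- Let H and V be real Hilbert spaces, let i : H → V be an injective compact continuous linear map with dense range, let a : H × H → ℝ be a continuous symmetric bilinear form, and suppose there exist λ > 0 and α > 0 with a(x,x) + λ⟨i x, i x⟩_V ≥ α‖x‖_H² for all x ∈ H. Define E := { x ∈ H : there exists ρ < 0 such that a(x, y) = ρ ⟨i x, i y⟩_V for all y ∈ H }. Then the linear span of E is finite-dimensional. -/

import Mathlib

/-- The span of the set of eigenvectors of the index form `a` with negative eigenvalue
relative to the scalar product `⟨i·, i·⟩_V` is finite-dimensional: the index of `a` is
finite (Appendix A of the paper). -/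
theorem finite_dimensional_span_of_negative_eigenvectors
    {H V : Type*}
    [NormedAddCommGroup H] [InnerProductSpace ℝ H] [CompleteSpace H]
    [NormedAddCommGroup V] [InnerProductSpace ℝ V] [CompleteSpace V]
    (i : H →L[ℝ] V) (hinj : Function.Injective i)
    (hcomp : IsCompactOperator (⇑i)) (hdense : DenseRange (⇑i))
    (a : H →L[ℝ] H →L[ℝ] ℝ) (hsymm : ∀ x y : H, a x y = a y x)
    (lam α : ℝ) (hlam : 0 < lam) (hα : 0 < α)
    (hcoer : ∀ x : H, α * ‖x‖ ^ 2 ≤ a x x + lam * (inner ℝ (i x) (i x) : ℝ)) :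
    FiniteDimensional ℝ
      (Submodule.span ℝ
        {x : H | ∃ ρ : ℝ, ρ < 0 ∧ ∀ y : H, a x y = ρ * (inner ℝ (i x) (i y) : ℝ)}) := by
  set E : Set H :=
    {x : H | ∃ ρ : ℝ, ρ < 0 ∧ ∀ y : H, a x y = ρ * (inner ℝ (i x) (i y) : ℝ)} with hE
  -- every element of the span decomposes as a finite sum of eigenvectors
  have hC : ∀ x ∈ Submodule.span ℝ E, ∃ (s : Finset ℝ) (f : ℝ → H),
      (∀ ρ ∈ s, ρ < 0) ∧
      (∀ ρ : ℝ, ∀ y : H, a (f ρ) y = ρ * (inner ℝ (i (f ρ)) (i y) : ℝ)) ∧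
      x = ∑ ρ ∈ s, f ρ := by
    intro x hx
    induction hx using Submodule.span_induction with
    | mem x hx =>
      obtain ⟨ρ, hρ, hax⟩ := hx
      refine ⟨{ρ}, fun σ => if σ = ρ then x else 0, by simpa using hρ, ?_, by simp⟩
      intro σ y
      by_cases h : σ = ρ
      · subst h; simpa using hax y
      · simp [h]
    | zero => exact ⟨∅, fun _ => 0, by simp, by simp, by simp⟩
    | add u v hu hv ihu ihv =>
      obtain ⟨s, f, hs, hf, hsum⟩ := ihu
      obtain ⟨t, g, ht, hg, htum⟩ := ihv
      refine ⟨s ∪ t, fun ρ => (if ρ ∈ s then f ρ else 0) + (if ρ ∈ t then g ρ else 0),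
        ?_, ?_, ?_⟩
      · intro ρ hρ
        rcases Finset.mem_union.mp hρ with h | h
        · exact hs ρ h
        · exact ht ρ h
      · intro ρ y
        have h1 : ∀ u : H, (∀ y : H, a u y = ρ * (inner ℝ (i u) (i y) : ℝ)) →
            ∀ v : H, (∀ y : H, a v y = ρ * (inner ℝ (i v) (i y) : ℝ)) →
            a (u + v) y = ρ * (inner ℝ (i (u + v)) (i y) : ℝ) := by
          intro u hu v hv
          simp only [map_add, ContinuousLinearMap.add_apply, inner_add_left, hu y, hv y]
          ring
        apply h1
        · split_ifs with h
          · exact hf ρ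
          · intro y; simp
        · split_ifs with h
          · exact hg ρ
          · intro y; simp
      · rw [hsum, htum, Finset.sum_add_distrib]
        congr 1
        · rw [Finset.sum_ite_mem, Finset.union_inter_cancel_left]
        · rw [Finset.sum_ite_mem, Finset.union_inter_cancel_right]
    | smul c u hu ihu =>
      obtain ⟨s, f, hs, hf, hsum⟩ := ihu
      refine ⟨s, fun ρ => c • f ρ, hs, ?_, by rw [hsum, Finset.smul_sum]⟩
      intro ρ y
      simp only [map_smul, ContinuousLinearMap.coe_smul', Pi.smul_apply, smul_eq_mul,
        real_inner_smul_left, hf ρ y]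
      ring
  -- hence the form is nonpositive on the span
  have hneg : ∀ x ∈ Submodule.span ℝ E, a x x ≤ 0 := by
    intro x hx
    obtain ⟨s, f, hs, hf, hsum⟩ := hC x hx
    have hexp : a x x = ∑ ρ ∈ s, ∑ σ ∈ s, a (f ρ) (f σ) := by
      rw [hsum, map_sum a f s, ContinuousLinearMap.sum_apply]
      exact Finset.sum_congr rfl fun ρ _ => map_sum (a (f ρ)) f s
    rw [hexp]
    apply Finset.sum_nonpos
    intro ρ hρ
    rw [Finset.sum_eq_single ρ]
    · rw [hf ρ (f ρ)]
      have h1 : (0 : ℝ) ≤ inner ℝ (i (f ρ)) (i (f ρ)) := real_inner_self_nonneg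
      have h2 : ρ < 0 := hs ρ hρ
      nlinarith
    · intro σ hσ hσρ
      have h1 : a (f ρ) (f σ) = ρ * (inner ℝ (i (f ρ)) (i (f σ)) : ℝ) := hf ρ (f σ)
      have h2 : a (f σ) (f ρ) = σ * (inner ℝ (i (f σ)) (i (f ρ)) : ℝ) := hf σ (f ρ)
      have h3 : inner ℝ (i (f σ)) (i (f ρ)) = (inner ℝ (i (f ρ)) (i (f σ)) : ℝ) :=
        real_inner_comm _ _
      have h4 : (ρ - σ) * (inner ℝ (i (f ρ)) (i (f σ)) : ℝ) = 0 := by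
        have := hsymm (f ρ) (f σ)
        rw [h1, h2, h3] at this
        linarith
      have h5 : (inner ℝ (i (f ρ)) (i (f σ)) : ℝ) = 0 := by
        rcases mul_eq_zero.mp h4 with h | h
        · exact absurd (sub_eq_zero.mp h) (Ne.symm hσρ)
        · exact h
      rw [h1, h5, mul_zero]
    · intro h; exact absurd hρ h
  -- coercivity on the span
  have key : ∀ x ∈ Submodule.span ℝ E, α * ‖x‖ ^ 2 ≤ lam * ‖i x‖ ^ 2 := by
    intro x hx
    have h1 := hcoer x
    have h2 := hneg x hx
    have h3 : (inner ℝ (i x) (i x) : ℝ) = ‖i x‖ ^ 2 := real_inner_self_eq_norm_sq _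
    rw [h3] at h1
    linarith
  -- conclude by compactness
  by_contra hfin
  obtain ⟨R, g, hR1, hgR, hgsep⟩ := exists_seq_norm_le_one_le_norm_sub (𝕜 := ℝ) hfin
  have hRpos : 0 < R := lt_trans zero_lt_one hR1
  obtain ⟨K, hKc, hKi⟩ :=
    IsCompactOperator.image_closedBall_subset_compact (𝕜₁ := ℝ)
      (f := (i : H →L[ℝ] V).toLinearMap) hcomp R
  set d : ℝ := α / lam with hd
  have hdpos : 0 < d := div_pos hα hlam
  set ε : ℝ := Real.sqrt d / 3 with hε
  have hεpos : 0 < ε := by positivity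
  obtain ⟨t, htf, htcover⟩ := (Metric.totallyBounded_iff.mp hKc.totallyBounded) ε hεpos
  have hmem : ∀ n : ℕ, ∃ y ∈ t, i ((g n : H)) ∈ Metric.ball y ε := by
    intro n
    have h1 : (g n : H) ∈ Metric.closedBall (0 : H) R := by
      rw [Metric.mem_closedBall, dist_zero_right]
      exact hgR n
    have h2 : i ((g n : H)) ∈ K := hKi ⟨(g n : H), h1, rfl⟩
    have h3 := htcover h2
    simpa using h3
  choose c hct hcd using hmem
  haveI : Finite ↥t := htf
  obtain ⟨n, m, hnm, hcnm⟩ :=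
    Finite.exists_ne_map_eq_of_infinite (fun n : ℕ => (⟨c n, hct n⟩ : ↥t))
  have hceq : c n = c m := by simpa using hcnm
  -- distance estimates
  have hdist : dist (i ((g n : H))) (i ((g m : H))) < 2 * ε := by
    calc dist (i ((g n : H))) (i ((g m : H)))
        ≤ dist (i ((g n : H))) (c n) + dist (c n) (i ((g m : H))) := dist_triangle _ _ _
      _ < ε + ε := by
          refine add_lt_add (hcd n) ?_
          rw [dist_comm, hceq]
          exact hcd m
      _ = 2 * ε := by ring
  have hsep : (1 : ℝ) ≤ ‖(g n : H) - (g m : H)‖ := by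
    rw [← Submodule.coe_sub]
    exact hgsep hnm
  have hspan : (g n : H) - (g m : H) ∈ Submodule.span ℝ E := by
    exact Submodule.sub_mem _ (g n).2 (g m).2
  have hkey := key _ hspan
  have hnorm : ‖i ((g n : H) - (g m : H))‖ = dist (i ((g n : H))) (i ((g m : H))) := by
    rw [map_sub, dist_eq_norm]
  have hlow : d ≤ ‖i ((g n : H) - (g m : H))‖ ^ 2 := by
    have h1 : α * 1 ≤ α * ‖(g n : H) - (g m : H)‖ ^ 2 := by
      apply mul_le_mul_of_nonneg_left _ hα.le
      nlinarith
    rw [hd, div_le_iff₀ hlam]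
    nlinarith
  have hsq : Real.sqrt d ^ 2 = d := Real.sq_sqrt hdpos.le
  have hup : ‖i ((g n : H) - (g m : H))‖ ^ 2 < (2 * ε) ^ 2 := by
    rw [hnorm]
    have h0 : 0 ≤ dist (i ((g n : H))) (i ((g m : H))) := dist_nonneg
    nlinarith
  rw [hε] at hup
  nlinarith [Real.sqrt_nonneg d]
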